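/- Let a₁, a₂, a₃ be strictly positive real numbers and let T(a) := a₁σ^el₁σ^n₁ + a₂σ^el₂σ^n₂ + a₃σ^el₃σ^n₃. Then T(a) is Hermitian, −(a₁ + a₂ + a₃) is an eigenvalue of T(a) whose eigenspace is one-dimensional, and every other eigenvalue μ of T(a) satisfies μ ≥ −(a₁ + a₂ + a₃) + 2·min(a₁ + a₂, a₂ + a₃, a₃ + a₁), where 2·min(a₁ + a₂, a₂ + a₃, a₃ + a₁) > 0. -/

import Mathlib

open Matrix

/-- The electron spin matrices `σ^el_j = σ_j ⊗ I₂` as explicit 4×4 complex matrices. -/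
noncomputable def sigmaEl : Fin 3 → Matrix (Fin 4) (Fin 4) ℂ
  | 0 => !![0,0,1,0; 0,0,0,1; 1,0,0,0; 0,1,0,0]
  | 1 => !![0,0,-Complex.I,0; 0,0,0,-Complex.I; Complex.I,0,0,0; 0,Complex.I,0,0]
  | 2 => !![1,0,0,0; 0,1,0,0; 0,0,-1,0; 0,0,0,-1]

/-- The nucleus spin matrices `σ^n_j = I₂ ⊗ σ_j` as explicit 4×4 complex matrices. -/
noncomputable def sigmaN : Fin 3 → Matrix (Fin 4) (Fin 4) ℂ
  | 0 => !![0,1,0,0; 1,0,0,0; 0,0,0,1; 0,0,1,0]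
  | 1 => !![0,-Complex.I,0,0; Complex.I,0,0,0; 0,0,0,-Complex.I; 0,0,Complex.I,0]
  | 2 => !![1,0,0,0; 0,-1,0,0; 0,0,1,0; 0,0,0,-1]

/-- `T(a) = a₁ σ^el₁σ^n₁ + a₂ σ^el₂σ^n₂ + a₃ σ^el₃σ^n₃` for real coefficients. -/
noncomputable def Tmat (a : Fin 3 → ℝ) : Matrix (Fin 4) (Fin 4) ℂ :=
  (a 0 : ℂ) • (sigmaEl 0 * sigmaN 0) + (a 1 : ℂ) • (sigmaEl 1 * sigmaN 1) +
    (a 2 : ℂ) • (sigmaEl 2 * sigmaN 2)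

lemma prod0 : sigmaEl 0 * sigmaN 0 = !![0,0,0,1; 0,0,1,0; 0,1,0,0; 1,0,0,0] := by
  ext i j
  fin_cases i <;> fin_cases j
  all_goals simp [sigmaEl, sigmaN, Matrix.mul_apply, Fin.sum_univ_four]
  all_goals exact rfl

lemma prod1 : sigmaEl 1 * sigmaN 1 = !![0,0,0,-1; 0,0,1,0; 0,1,0,0; -1,0,0,0] := by
  ext i j
  fin_cases i <;> fin_cases j
  all_goals simp [sigmaEl, sigmaN, Matrix.mul_apply, Fin.sum_univ_four, Complex.I_mul_I]
  all_goals exact rfl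

lemma prod2 : sigmaEl 2 * sigmaN 2 = !![1,0,0,0; 0,-1,0,0; 0,0,-1,0; 0,0,0,1] := by
  ext i j
  fin_cases i <;> fin_cases j
  all_goals simp [sigmaEl, sigmaN, Matrix.mul_apply, Fin.sum_univ_four]
  all_goals first | exact rfl | exact neg_zero

lemma Tmat_eq (a : Fin 3 → ℝ) : Tmat a =
    !![(a 2 : ℂ), 0, 0, (a 0 : ℂ) - a 1;
       0, -(a 2 : ℂ), (a 0 : ℂ) + a 1, 0;
       0, (a 0 : ℂ) + a 1, -(a 2 : ℂ), 0;
       (a 0 : ℂ) - a 1, 0, 0, (a 2 : ℂ)] := by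
  rw [Tmat, prod0, prod1, prod2]
  ext i j
  fin_cases i <;> fin_cases j
  all_goals simp [Matrix.add_apply, Matrix.smul_apply]
  all_goals first | exact rfl | exact add_zero _ | ring

theorem Tmat_ground_state_gap (a : Fin 3 → ℝ) (ha : ∀ j, 0 < a j) :
    (Tmat a).IsHermitian ∧
    Module.End.HasEigenvalue (Tmat a).mulVecLin (-(a 0 + a 1 + a 2) : ℂ) ∧
    Module.finrank ℂ
      (Module.End.eigenspace (Tmat a).mulVecLin (-(a 0 + a 1 + a 2) : ℂ)) = 1 ∧
    0 < 2 * min (a 0 + a 1) (min (a 1 + a 2) (a 2 + a 0)) ∧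
    ∀ μ : ℂ, Module.End.HasEigenvalue (Tmat a).mulVecLin μ →
      μ ≠ (-(a 0 + a 1 + a 2) : ℂ) →
      ∃ x : ℝ, μ = (x : ℂ) ∧
        -(a 0 + a 1 + a 2) + 2 * min (a 0 + a 1) (min (a 1 + a 2) (a 2 + a 0)) ≤ x := by
  have h0pos := ha 0
  have h1pos := ha 1
  have h2pos := ha 2
  -- the ground-state eigenvector
  set μ₀ : ℂ := (-(a 0 + a 1 + a 2) : ℂ) with hμ₀
  have hv : (Tmat a).mulVecLin ![0,1,-1,0] = μ₀ • ![0,1,-1,0] := by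
    funext i
    fin_cases i
    all_goals
      simp [Tmat_eq, Matrix.mulVecLin_apply, Matrix.mulVec, dotProduct,
        Fin.sum_univ_four, hμ₀]
    all_goals push_cast
    all_goals ring
  have hvne : (![0,1,-1,0] : Fin 4 → ℂ) ≠ 0 := by
    intro h
    have := congrFun h 1
    simp at this
  have hevec : Module.End.HasEigenvector (Tmat a).mulVecLin μ₀ ![0,1,-1,0] :=
    ⟨Module.End.mem_eigenspace_iff.2 hv, hvne⟩
  refine ⟨?_, ?_, ?_, ?_, ?_⟩
  · -- Hermitian
    show (Tmat a)ᴴ = Tmat a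
    rw [Tmat_eq]
    ext i j
    fin_cases i <;> fin_cases j
    all_goals simp [Matrix.conjTranspose_apply, Complex.conj_ofReal, map_sub, map_add]
  · exact Module.End.hasEigenvalue_of_hasEigenvector hevec
  · -- one-dimensional eigenspace
    have hspan : Module.End.eigenspace (Tmat a).mulVecLin μ₀ =
        Submodule.span ℂ {(![0,1,-1,0] : Fin 4 → ℂ)} := by
      apply le_antisymm
      · intro x hx
        rw [Module.End.mem_eigenspace_iff] at hx
        have h0 := congrFun hx 0
        have h1 := congrFun hx 1
        have h2 := congrFun hx 2
        have h3 := congrFun hx 3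
        simp [Tmat_eq, Matrix.mulVecLin_apply, Matrix.mulVec, dotProduct,
          Fin.sum_univ_four, hμ₀] at h0 h1 h2 h3
        have hA : ((a 0 : ℂ) + a 2) ≠ 0 := by
          intro h
          have : ((a 0 + a 2 : ℝ) : ℂ) = 0 := by push_cast; linear_combination h
          have := Complex.ofReal_eq_zero.mp this
          linarith
        have hB : ((a 1 : ℂ) + a 2) ≠ 0 := by
          intro h
          have : ((a 1 + a 2 : ℝ) : ℂ) = 0 := by push_cast; linear_combination h
          have := Complex.ofReal_eq_zero.mp this
          linarith
        have hC : ((a 0 : ℂ) + a 1) ≠ 0 := by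
          intro h
          have : ((a 0 + a 1 : ℝ) : ℂ) = 0 := by push_cast; linear_combination h
          have := Complex.ofReal_eq_zero.mp this
          linarith
        have k1 : x 0 + x 3 = 0 := by
          have hk : ((a 0 : ℂ) + a 2) * (x 0 + x 3) = 0 := by
            linear_combination (1/2 : ℂ) * h0 + (1/2 : ℂ) * h3
          exact (mul_eq_zero.mp hk).resolve_left hA
        have k2 : x 0 - x 3 = 0 := by
          have hk : ((a 1 : ℂ) + a 2) * (x 0 - x 3) = 0 := by
            linear_combination (1/2 : ℂ) * h0 - (1/2 : ℂ) * h3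
          exact (mul_eq_zero.mp hk).resolve_left hB
        have k3 : x 1 + x 2 = 0 := by
          have hk : ((a 0 : ℂ) + a 1) * (x 1 + x 2) = 0 := by
            linear_combination (1/2 : ℂ) * h1 + (1/2 : ℂ) * h2
          exact (mul_eq_zero.mp hk).resolve_left hC
        refine Submodule.mem_span_singleton.2 ⟨x 1, ?_⟩
        funext i
        fin_cases i
        · show x 1 * 0 = x 0
          have : x 0 = 0 := by linear_combination (1/2:ℂ) * k1 + (1/2:ℂ) * k2
          rw [this]; ring
        · show x 1 * 1 = x 1
          ring
        · show x 1 * (-1) = x 2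
          linear_combination -k3
        · show x 1 * 0 = x 3
          have : x 3 = 0 := by linear_combination (1/2:ℂ) * k1 - (1/2:ℂ) * k2
          rw [this]; ring
      · rw [Submodule.span_singleton_le_iff_mem]
        exact hevec.1
    rw [hspan]
    exact finrank_span_singleton hvne
  · -- positivity of the gap
    have : 0 < min (a 0 + a 1) (min (a 1 + a 2) (a 2 + a 0)) :=
      lt_min (by linarith) (lt_min (by linarith) (by linarith))
    linarith
  · -- all other eigenvalues
    intro μ hμ hne
    obtain ⟨x, hx, hx0⟩ := hμ.exists_hasEigenvector
    rw [Module.End.mem_eigenspace_iff] at hx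
    have h0 := congrFun hx 0
    have h1 := congrFun hx 1
    have h2 := congrFun hx 2
    have h3 := congrFun hx 3
    simp [Tmat_eq, Matrix.mulVecLin_apply, Matrix.mulVec, dotProduct,
      Fin.sum_univ_four] at h0 h1 h2 h3
    have p1 : ((a 2 : ℂ) + (a 0 - a 1) - μ) * (x 0 + x 3) = 0 := by
      linear_combination h0 + h3
    have p2 : ((a 2 : ℂ) - (a 0 - a 1) - μ) * (x 0 - x 3) = 0 := by
      linear_combination h0 - h3
    have p3 : (-(a 2 : ℂ) + (a 0 + a 1) - μ) * (x 1 + x 2) = 0 := by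
      linear_combination h1 + h2
    have p4 : (-(a 2 : ℂ) - (a 0 + a 1) - μ) * (x 1 - x 2) = 0 := by
      linear_combination h1 - h2
    have hmin1 : min (a 0 + a 1) (min (a 1 + a 2) (a 2 + a 0)) ≤ a 2 + a 0 :=
      le_trans (min_le_right _ _) (min_le_right _ _)
    have hmin2 : min (a 0 + a 1) (min (a 1 + a 2) (a 2 + a 0)) ≤ a 1 + a 2 :=
      le_trans (min_le_right _ _) (min_le_left _ _)
    have hmin3 : min (a 0 + a 1) (min (a 1 + a 2) (a 2 + a 0)) ≤ a 0 + a 1 :=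
      min_le_left _ _
    -- x 1 = x 2 since μ ≠ μ₀
    have k4 : x 1 - x 2 = 0 := by
      refine (mul_eq_zero.mp p4).resolve_left ?_
      intro h
      apply hne
      push_cast
      linear_combination -h
    rcases mul_eq_zero.mp p1 with hc1 | k1
    · refine ⟨a 2 + a 0 - a 1, ?_, by linarith⟩
      push_cast
      linear_combination -hc1
    rcases mul_eq_zero.mp p2 with hc2 | k2
    · refine ⟨a 2 + a 1 - a 0, ?_, by linarith⟩
      push_cast
      linear_combination -hc2
    rcases mul_eq_zero.mp p3 with hc3 | k3
    · refine ⟨a 0 + a 1 - a 2, ?_, by linarith⟩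
      push_cast
      linear_combination -hc3
    exfalso
    apply hx0
    funext i
    fin_cases i
    · show x 0 = 0
      linear_combination (1/2:ℂ) * k1 + (1/2:ℂ) * k2
    · show x 1 = 0
      linear_combination (1/2:ℂ) * k3 + (1/2:ℂ) * k4
    · show x 2 = 0
      linear_combination (1/2:ℂ) * k3 - (1/2:ℂ) * k4
    · show x 3 = 0
      linear_combination (1/2:ℂ) * k1 - (1/2:ℂ) * k2
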